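/- Every subgroup of a finite group G that achieves the maximal Chermak-Delgado measure is subnormal in G. -/

import Mathlib

/-- The Chermak-Delgado measure of a subgroup `H` of `G`: `|H| * |C_G(H)|`. -/
noncomputable def cdMeasure {G : Type*} [Group G] (H : Subgroup G) : ℕ :=
  Nat.card H * Nat.card (Subgroup.centralizer (H : Set G))

/-- The Chermak-Delgado lattice: subgroups of maximal Chermak-Delgado measure. -/
def CD (G : Type*) [Group G] : Set (Subgroup G) :=
  {H : Subgroup G | ∀ K : Subgroup G, cdMeasure K ≤ cdMeasure H}

/-- A subgroup is subnormal if there is a chain of successive normal inclusions up to `G`. -/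
def IsSubnormal {G : Type*} [Group G] (H : Subgroup G) : Prop :=
  ∃ (n : ℕ) (c : ℕ → Subgroup G), c 0 = H ∧ c n = ⊤ ∧
    ∀ i < n, c i ≤ c (i + 1) ∧ ((c i).subgroupOf (c (i + 1))).Normal

namespace CDAux

open Subgroup Pointwise

variable {G : Type*} [Group G]

/-! ### Chains of successive normal inclusions -/

/-- A chain of successive normal inclusions from `H` up to `K`. -/
def ChainTo (H K : Subgroup G) : Prop :=
  ∃ (n : ℕ) (c : ℕ → Subgroup G), c 0 = H ∧ c n = K ∧
    ∀ i < n, c i ≤ c (i + 1) ∧ ((c i).subgroupOf (c (i + 1))).Normal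

lemma isSubnormal_iff {H : Subgroup G} : _root_.IsSubnormal H ↔ ChainTo H ⊤ := Iff.rfl

lemma ChainTo.single {H K : Subgroup G} (hle : H ≤ K) (hn : (H.subgroupOf K).Normal) :
    ChainTo H K := by
  refine ⟨1, fun i => if i = 0 then H else K, by simp, by simp, ?_⟩
  intro i hi
  have : i = 0 := by omega
  subst this
  simpa using ⟨hle, hn⟩

lemma ChainTo.trans {H K L : Subgroup G} (h1 : ChainTo H K) (h2 : ChainTo K L) :
    ChainTo H L := by
  classical
  obtain ⟨m, c, hc0, hcm, hc⟩ := h1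
  obtain ⟨n, d, hd0, hdn, hd⟩ := h2
  set e : ℕ → Subgroup G := fun i => if i < m then c i else d (i - m) with he
  have he1 : ∀ t, t < m → e t = c t := fun t ht => if_pos ht
  have he2 : ∀ t, ¬ t < m → e t = d (t - m) := fun t ht => if_neg ht
  refine ⟨m + n, e, ?_, ?_, ?_⟩
  · by_cases h : 0 < m
    · rw [he1 0 h, hc0]
    · have hm : m = 0 := by omega
      rw [he2 0 (by omega)]
      subst hm
      rw [Nat.sub_zero, hd0, ← hcm, hc0]
  · rw [he2 (m + n) (by omega), Nat.add_sub_cancel_left, hdn]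
  · intro i hi
    by_cases h1i : i + 1 < m
    · have h2i : i < m := by omega
      rw [he1 i h2i, he1 (i + 1) h1i]
      exact hc i h2i
    · by_cases h2i : i < m
      · have him : i + 1 = m := by omega
        have hstep := hc i h2i
        have hKd : e (i + 1) = c (i + 1) := by
          rw [he2 (i + 1) h1i, him, Nat.sub_self, hd0, ← hcm]
        rw [he1 i h2i, hKd]
        exact hstep
      · have h4 : i + 1 - m = (i - m) + 1 := by omega
        rw [he2 i h2i, he2 (i + 1) h1i, h4]
        exact hd (i - m) (by omega)

lemma ChainTo.top : ChainTo (⊤ : Subgroup G) ⊤ :=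
  ⟨0, fun _ => ⊤, rfl, rfl, fun i hi => absurd hi (by omega)⟩

/-- Transport a normal inclusion through the embedding of a subgroup. -/
lemma normal_map_subtype {J : Subgroup G} {A B : Subgroup ↥J} (hAB : A ≤ B)
    (h : (A.subgroupOf B).Normal) :
    ((A.map J.subtype).subgroupOf (B.map J.subtype)).Normal := by
  rw [normal_subgroupOf_iff hAB] at h
  rw [normal_subgroupOf_iff (map_mono hAB)]
  rintro x y ⟨a, ha, rfl⟩ ⟨b, hb, rfl⟩
  have := h a b ha hb
  refine ⟨b * a * b⁻¹, this, ?_⟩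
  simp [mul_assoc]

lemma ChainTo.map_subtype {J : Subgroup G} {A : Subgroup ↥J}
    (h : ChainTo A (⊤ : Subgroup ↥J)) : ChainTo (A.map J.subtype) J := by
  obtain ⟨n, c, hc0, hcn, hc⟩ := h
  refine ⟨n, fun i => (c i).map J.subtype, by simp only [hc0], ?_, ?_⟩
  · simp only [hcn]
    rw [← MonoidHom.range_eq_map, range_subtype]
  · intro i hi
    exact ⟨map_mono (hc i hi).1, normal_map_subtype (hc i hi).1 (hc i hi).2⟩

/-! ### Cardinality of a product of two subgroups -/

/-- The image of `A` in `G ⧸ B` is equivalent to `A ⧸ (B.subgroupOf A)`. -/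
noncomputable def imageQuotientEquiv (A B : Subgroup G) :
    (A ⧸ (B.subgroupOf A)) ≃ ((A : Set G).image (QuotientGroup.mk (s := B))) := by
  refine Equiv.ofBijective
    (fun q => Quotient.liftOn' q
      (fun a => (⟨QuotientGroup.mk (a : G), ⟨(a : G), a.2, rfl⟩⟩ :
        ((A : Set G).image (QuotientGroup.mk (s := B)))))
      ?_) ⟨?_, ?_⟩
  · intro a a' hrel
    have h : (a : G)⁻¹ * (a' : G) ∈ B := by
      have := QuotientGroup.leftRel_apply.mp hrel
      exact_mod_cast this
    exact Subtype.ext (QuotientGroup.eq.mpr h)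
  · intro q q'
    induction q using Quotient.inductionOn'
    induction q' using Quotient.inductionOn'
    intro h
    apply Quotient.sound'
    rw [QuotientGroup.leftRel_apply]
    have : _ ∈ B := QuotientGroup.eq.mp (congrArg Subtype.val h)
    exact_mod_cast this
  · rintro ⟨q, a, ha, rfl⟩
    exact ⟨Quotient.mk'' ⟨a, ha⟩, rfl⟩

lemma card_mul_inf [Finite G] (A B : Subgroup G) :
    Nat.card ((A : Set G) * (B : Set G) : Set G) * Nat.card (A ⊓ B : Subgroup G)
      = Nat.card A * Nat.card B := by
  have h1 : Nat.card ((A : Set G) * (B : Set G) : Set G)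
      = Nat.card B * Nat.card ((A : Set G).image (QuotientGroup.mk (s := B))) :=
    card_mul_eq_card_subgroup_mul_card_quotient B (A : Set G)
  have h2 : Nat.card ((A : Set G).image (QuotientGroup.mk (s := B)))
      = Nat.card (A ⧸ (B.subgroupOf A)) := (Nat.card_congr (imageQuotientEquiv A B)).symm
  have h3 : Nat.card A = Nat.card (A ⧸ (B.subgroupOf A)) * Nat.card (B.subgroupOf A) :=
    card_eq_card_quotient_mul_card_subgroup (B.subgroupOf A)
  have h4 : Nat.card (B.subgroupOf A) = Nat.card (A ⊓ B : Subgroup G) := by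
    rw [inf_comm]
    calc Nat.card (B.subgroupOf A)
        = Nat.card ((B.subgroupOf A).map A.subtype) :=
          Nat.card_congr (equivMapOfInjective _ _ (subtype_injective A)).toEquiv
      _ = Nat.card (B ⊓ A : Subgroup G) := by rw [subgroupOf_map_subtype]
  rw [h1, h2, ← h4]
  rw [h3]
  ring

/-! ### Basic centralizer lemmas -/

lemma le_centralizer_centralizer' (H : Subgroup G) :
    H ≤ centralizer ((centralizer (H : Set G) : Subgroup G) : Set G) :=
  le_centralizer_iff.mpr le_rfl

lemma centralizer_sup' (A B : Subgroup G) :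
    centralizer ((A ⊔ B : Subgroup G) : Set G) = centralizer (A : Set G) ⊓ centralizer (B : Set G) := by
  apply le_antisymm
  · exact le_inf (centralizer_le (SetLike.coe_subset_coe.mpr le_sup_left))
      (centralizer_le (SetLike.coe_subset_coe.mpr le_sup_right))
  · rintro x ⟨hxA, hxB⟩
    rw [mem_centralizer_iff]
    intro h hh
    have hsub : A ⊔ B ≤ centralizer ({x} : Set G) := by
      apply sup_le
      · intro a ha
        rw [mem_centralizer_singleton_iff]
        exact mem_centralizer_iff.mp hxA a ha
      · intro b hb
        rw [mem_centralizer_singleton_iff]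
        exact mem_centralizer_iff.mp hxB b hb
    exact mem_centralizer_singleton_iff.mp (hsub hh)

lemma coe_mul_subset_sup (A B : Subgroup G) :
    (A : Set G) * (B : Set G) ⊆ ((A ⊔ B : Subgroup G) : Set G) := by
  rintro x hx
  obtain ⟨a, ha, b, hb, rfl⟩ := Set.mem_mul.mp hx
  exact mul_mem (le_sup_left (a := A) (b := B) ha) (le_sup_right (a := A) (b := B) hb)

lemma mul_centralizers_subset (A B : Subgroup G) :
    ((centralizer (A : Set G) : Subgroup G) : Set G) * ((centralizer (B : Set G) : Subgroup G) : Set G)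
      ⊆ ((centralizer ((A ⊓ B : Subgroup G) : Set G) : Subgroup G) : Set G) := by
  rintro x hx
  obtain ⟨c, hc, c', hc', rfl⟩ := Set.mem_mul.mp hx
  rw [SetLike.mem_coe, mem_centralizer_iff]
  intro h hh
  have hhA : h ∈ A := (inf_le_left : A ⊓ B ≤ A) hh
  have hhB : h ∈ B := (inf_le_right : A ⊓ B ≤ B) hh
  have h1 : h * c = c * h := mem_centralizer_iff.mp hc h hhA
  have h2 : h * c' = c' * h := mem_centralizer_iff.mp hc' h hhB
  calc h * (c * c') = (h * c) * c' := by rw [mul_assoc]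
    _ = c * (h * c') := by rw [h1, mul_assoc]
    _ = (c * c') * h := by rw [h2, mul_assoc]

lemma cdMeasure_pos [Finite G] (H : Subgroup G) : 0 < cdMeasure H :=
  Nat.mul_pos Nat.card_pos Nat.card_pos

/-! ### The CD lattice -/

lemma cdMeasure_eq_of_mem_CD [Finite G] {A B : Subgroup G} (hA : A ∈ CD G) (hB : B ∈ CD G) :
    cdMeasure A = cdMeasure B :=
  le_antisymm (hB A) (hA B)

lemma centralizer_mem_CD [Finite G] {M : Subgroup G} (hM : M ∈ CD G) :
    centralizer (M : Set G) ∈ CD G := by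
  intro K
  refine (hM K).trans ?_
  unfold cdMeasure
  rw [mul_comm]
  exact Nat.mul_le_mul_left _ (card_le_of_le (le_centralizer_centralizer' M))

/-- The key Chermak-Delgado computation: the join of two members of the CD lattice
is again in the CD lattice, and the set product of the two members covers the join. -/
lemma sup_mem_CD_and_mul_eq [Finite G] {A B : Subgroup G} (hA : A ∈ CD G) (hB : B ∈ CD G) :
    A ⊔ B ∈ CD G ∧ (A : Set G) * (B : Set G) = ((A ⊔ B : Subgroup G) : Set G) := by
  classical
  set m := cdMeasure A with hm
  have hBm : cdMeasure B = m := (cdMeasure_eq_of_mem_CD hA hB).symm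
  set a := Nat.card ((A : Set G) * (B : Set G) : Set G) with ha
  set j := Nat.card (A ⊔ B : Subgroup G) with hj
  set d := Nat.card (A ⊓ B : Subgroup G) with hd
  set v := Nat.card (centralizer (((A ⊔ B : Subgroup G) : Set G))) with hv
  set e := Nat.card (centralizer (((A ⊓ B : Subgroup G) : Set G))) with he
  set u := Nat.card (((centralizer (A : Set G) : Subgroup G) : Set G) *
    ((centralizer (B : Set G) : Subgroup G) : Set G) : Set G) with hu
  have key1 : a * d = Nat.card A * Nat.card B := card_mul_inf A B
  have key2 : u * v = Nat.card (centralizer (A : Set G)) * Nat.card (centralizer (B : Set G)) := by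
    have := card_mul_inf (centralizer (A : Set G)) (centralizer (B : Set G))
    rwa [← centralizer_sup'] at this
  have hmm : m * m = (a * d) * (u * v) := by
    calc m * m = cdMeasure A * cdMeasure B := by rw [hBm, ← hm]
      _ = (Nat.card A * Nat.card B) *
          (Nat.card (centralizer (A : Set G)) * Nat.card (centralizer (B : Set G))) := by
          unfold cdMeasure; ring
      _ = (a * d) * (u * v) := by rw [key1, key2]
  have hale : a ≤ j := by
    have := Nat.card_mono (Set.toFinite (((A ⊔ B : Subgroup G) : Set G))) (coe_mul_subset_sup A B)
    exact this
  have hule : u ≤ e := by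
    have := Nat.card_mono (Set.toFinite (((centralizer ((A ⊓ B : Subgroup G) : Set G) : Subgroup G) : Set G)))
      (mul_centralizers_subset A B)
    exact this
  have hsup : cdMeasure (A ⊔ B) = j * v := rfl
  have hinf : cdMeasure (A ⊓ B) = d * e := rfl
  have hchain : m * m ≤ cdMeasure (A ⊔ B) * cdMeasure (A ⊓ B) := by
    rw [hsup, hinf, hmm]
    calc (a * d) * (u * v) ≤ (j * d) * (e * v) :=
          Nat.mul_le_mul (Nat.mul_le_mul_right _ hale) (Nat.mul_le_mul_right _ hule)
      _ = (j * v) * (d * e) := by ring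
  have hsuple : cdMeasure (A ⊔ B) ≤ m := hA _
  have hinfle : cdMeasure (A ⊓ B) ≤ m := hA _
  have hmpos : 0 < m := cdMeasure_pos A
  have heq : cdMeasure (A ⊔ B) * cdMeasure (A ⊓ B) = m * m :=
    le_antisymm (Nat.mul_le_mul hsuple hinfle) hchain
  have hsupeq : cdMeasure (A ⊔ B) = m := by
    by_contra hne
    have hlt : cdMeasure (A ⊔ B) < m := lt_of_le_of_ne hsuple hne
    have : cdMeasure (A ⊔ B) * cdMeasure (A ⊓ B) < m * m := by
      calc cdMeasure (A ⊔ B) * cdMeasure (A ⊓ B) ≤ cdMeasure (A ⊔ B) * m :=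
            Nat.mul_le_mul_left _ hinfle
        _ < m * m := (Nat.mul_lt_mul_right hmpos).mpr hlt
    omega
  constructor
  · intro K
    rw [hsupeq]
    exact hA K
  · -- equality of the products gives a = j
    have hdvpos : 0 < d * v := by
      have h1 : 0 < d := Nat.card_pos
      have h2 : 0 < v := Nat.card_pos
      positivity
    have hupos : 0 < u := by
      have : (1 : G) ∈ (((centralizer (A : Set G) : Subgroup G) : Set G) *
          ((centralizer (B : Set G) : Subgroup G) : Set G) : Set G) := by
        rw [Set.mem_mul]
        exact ⟨1, one_mem _, 1, one_mem _, mul_one 1⟩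
      have : Nonempty (((centralizer (A : Set G) : Subgroup G) : Set G) *
          ((centralizer (B : Set G) : Subgroup G) : Set G) : Set G) := ⟨⟨1, this⟩⟩
      exact Nat.card_pos
    have hinfeq : cdMeasure (A ⊓ B) = m := by
      have := heq
      rw [hsupeq] at this
      exact Nat.eq_of_mul_eq_mul_left hmpos this
    have haueq : a * u = j * e := by
      have h5 : (a * u) * (d * v) = (j * e) * (d * v) := by
        calc (a * u) * (d * v) = (a * d) * (u * v) := by ring
          _ = m * m := hmm.symm
          _ = cdMeasure (A ⊔ B) * cdMeasure (A ⊓ B) := heq.symm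
          _ = (j * v) * (d * e) := by rw [hsup, hinf]
          _ = (j * e) * (d * v) := by ring
      exact Nat.eq_of_mul_eq_mul_right hdvpos h5
    have haj : a = j := by
      have h6 : a * u ≤ j * u := Nat.mul_le_mul_right _ hale
      have h7 : j * u ≤ j * e := Nat.mul_le_mul_left _ hule
      have h8 : j * u = a * u := by omega
      exact (Nat.eq_of_mul_eq_mul_right hupos h8).symm
    apply Set.eq_of_subset_of_ncard_le (coe_mul_subset_sup A B) _ (Set.toFinite _)
    rw [← Nat.card_coe_set_eq, ← Nat.card_coe_set_eq]
    have : Nat.card (((A ⊔ B : Subgroup G) : Set G)) = j := by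
      rw [hj]; rfl
    rw [this, ← ha, haj]

/-! ### Conjugation -/

lemma card_smul (g : G) (A : Subgroup G) :
    Nat.card (MulAut.conj g • A : Subgroup G) = Nat.card A := by
  rw [pointwise_smul_def]
  exact (Nat.card_congr (equivMapOfInjective A _ (MulAut.conj g).injective).toEquiv).symm

lemma centralizer_smul (g : G) (A : Subgroup G) :
    centralizer ((MulAut.conj g • A : Subgroup G) : Set G)
      = MulAut.conj g • centralizer (A : Set G) := by
  ext x
  rw [mem_pointwise_smul_iff_inv_smul_mem, mem_centralizer_iff, mem_centralizer_iff]
  constructor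
  · intro h b hb
    have hmem : g * b * g⁻¹ ∈ (MulAut.conj g • A : Subgroup G) := by
      rw [mem_pointwise_smul_iff_inv_smul_mem]
      simpa [MulAut.smul_def, mul_assoc] using hb
    have := h (g * b * g⁻¹) hmem
    have hx : (MulAut.conj g)⁻¹ • x = g⁻¹ * x * g := by
      simp [MulAut.smul_def]
    rw [hx]
    -- from (g b g⁻¹) x = x (g b g⁻¹), deduce b (g⁻¹ x g) = (g⁻¹ x g) b
    have h2 : g⁻¹ * ((g * b * g⁻¹) * x) * g = g⁻¹ * (x * (g * b * g⁻¹)) * g := by rw [this]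
    calc b * (g⁻¹ * x * g) = g⁻¹ * ((g * b * g⁻¹) * x) * g := by group
      _ = g⁻¹ * (x * (g * b * g⁻¹)) * g := h2
      _ = (g⁻¹ * x * g) * b := by group
  · intro h c hc
    rw [SetLike.mem_coe, mem_pointwise_smul_iff_inv_smul_mem] at hc
    have hx : (MulAut.conj g)⁻¹ • c = g⁻¹ * c * g := by simp [MulAut.smul_def]
    rw [hx] at hc
    have := h (g⁻¹ * c * g) hc
    rw [show (MulAut.conj g)⁻¹ • x = g⁻¹ * x * g by simp [MulAut.smul_def]] at this
    -- from (g⁻¹ c g)(g⁻¹ x g) = (g⁻¹ x g)(g⁻¹ c g), deduce c x = x c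
    have h2 : g * ((g⁻¹ * c * g) * (g⁻¹ * x * g)) * g⁻¹
        = g * ((g⁻¹ * x * g) * (g⁻¹ * c * g)) * g⁻¹ := by rw [this]
    calc c * x = g * ((g⁻¹ * c * g) * (g⁻¹ * x * g)) * g⁻¹ := by group
      _ = g * ((g⁻¹ * x * g) * (g⁻¹ * c * g)) * g⁻¹ := h2
      _ = x * c := by group

lemma cdMeasure_smul [Finite G] (g : G) (A : Subgroup G) :
    cdMeasure (MulAut.conj g • A : Subgroup G) = cdMeasure A := by
  unfold cdMeasure
  rw [card_smul, centralizer_smul]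
  congr 1
  rw [pointwise_smul_def]
  exact (Nat.card_congr (equivMapOfInjective _ _ (MulAut.conj g).injective).toEquiv).symm

lemma smul_mem_CD [Finite G] {M : Subgroup G} (hM : M ∈ CD G) (g : G) :
    (MulAut.conj g • M : Subgroup G) ∈ CD G := fun K =>
  (hM K).trans_eq (cdMeasure_smul g M).symm

lemma exists_smul_ne {M : Subgroup G} (h : ¬ M.Normal) :
    ∃ g : G, (MulAut.conj g • M : Subgroup G) ≠ M := by
  by_contra hcon
  push_neg at hcon
  apply h
  constructor
  intro n hn g
  have := hcon g
  rw [← this, mem_pointwise_smul_iff_inv_smul_mem]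
  have : (MulAut.conj g)⁻¹ • (g * n * g⁻¹) = n := by
    simp [MulAut.smul_def, mul_assoc]
  rw [this]
  exact hn

lemma smul_eq_of_mem {M : Subgroup G} {g : G} (hg : g ∈ M) :
    (MulAut.conj g • M : Subgroup G) = M := by
  ext x
  rw [mem_pointwise_smul_iff_inv_smul_mem]
  have hx : (MulAut.conj g)⁻¹ • x = g⁻¹ * x * g := by simp [MulAut.smul_def]
  rw [hx]
  constructor
  · intro h
    have := mul_mem (mul_mem hg h) (inv_mem hg)
    simpa [mul_assoc] using this
  · intro h
    exact mul_mem (mul_mem (inv_mem hg) h) hg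

/-! ### Cardinality comparisons -/

lemma eq_of_le_of_card_le' [Finite G] {A B : Subgroup G} (hle : A ≤ B)
    (hcard : Nat.card B ≤ Nat.card A) : A = B := by
  apply SetLike.coe_injective
  apply Set.eq_of_subset_of_ncard_le (SetLike.coe_subset_coe.mpr hle) _ (Set.toFinite _)
  rw [← Nat.card_coe_set_eq, ← Nat.card_coe_set_eq]
  simpa using hcard

lemma card_lt_of_lt [Finite G] {A B : Subgroup G} (h : A < B) : Nat.card A < Nat.card B := by
  refine lt_of_le_of_ne (card_le_of_le h.le) fun he => h.ne ?_
  exact eq_of_le_of_card_le' h.le he.ge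

lemma card_lt_of_ne_top [Finite G] {J : Subgroup G} (h : J ≠ ⊤) :
    Nat.card J < Nat.card G := by
  refine lt_of_le_of_ne (card_le_card_group J) fun he => h ?_
  exact eq_top_of_card_eq J he

/-! ### Transfer of CD membership to subgroups -/

lemma subgroupOf_mem_CD [Finite G] {M J : Subgroup G} (hM : M ∈ CD G) (hMJ : M ≤ J)
    (hC : centralizer (M : Set G) ≤ J) : M.subgroupOf J ∈ CD ↥J := by
  intro L
  have hcard : Nat.card L = Nat.card (L.map J.subtype) :=
    Nat.card_congr (equivMapOfInjective L J.subtype (subtype_injective J)).toEquiv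
  have hcmap : (centralizer (L : Set ↥J)).map J.subtype
      ≤ centralizer ((L.map J.subtype : Subgroup G) : Set G) := by
    rintro _ ⟨x, hx, rfl⟩
    rw [mem_centralizer_iff]
    rintro _ ⟨l, hl, rfl⟩
    have := mem_centralizer_iff.mp hx l hl
    simpa [map_mul] using congrArg J.subtype this
  have hcent : Nat.card (centralizer (L : Set ↥J))
      ≤ Nat.card (centralizer ((L.map J.subtype : Subgroup G) : Set G)) := by
    calc Nat.card (centralizer (L : Set ↥J))
        = Nat.card ((centralizer (L : Set ↥J)).map J.subtype) :=
          Nat.card_congr (equivMapOfInjective _ _ (subtype_injective J)).toEquiv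
      _ ≤ _ := card_le_of_le hcmap
  have h1 : cdMeasure L ≤ cdMeasure (L.map J.subtype) := by
    unfold cdMeasure
    rw [hcard]
    exact Nat.mul_le_mul_left _ hcent
  have e1 : Nat.card (M.subgroupOf J) = Nat.card M :=
    Nat.card_congr (subgroupOfEquivOfLe hMJ).toEquiv
  have e2 : centralizer ((M.subgroupOf J : Subgroup ↥J) : Set ↥J)
      = (centralizer (M : Set G)).subgroupOf J := by
    ext x
    rw [mem_subgroupOf, mem_centralizer_iff, mem_centralizer_iff]
    constructor
    · intro h m hm
      have hmem : (⟨m, hMJ hm⟩ : ↥J) ∈ (M.subgroupOf J : Subgroup ↥J) := by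
        rw [mem_subgroupOf]
        exact hm
      have := h _ hmem
      exact congrArg Subtype.val this
    · intro h y hy
      rw [SetLike.mem_coe, mem_subgroupOf] at hy
      exact Subtype.ext (h (y : G) hy)
  have e3 : Nat.card ((centralizer (M : Set G)).subgroupOf J)
      = Nat.card (centralizer (M : Set G)) :=
    Nat.card_congr (subgroupOfEquivOfLe hC).toEquiv
  have e4 : cdMeasure (M.subgroupOf J) = cdMeasure M := by
    unfold cdMeasure
    rw [e1, e2, e3]
  rw [e4]
  exact h1.trans (hM (L.map J.subtype))

/-! ### The main induction -/

set_option maxHeartbeats 1000000 in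
theorem main : ∀ (n : ℕ) (G : Type u) [Group G] [Finite G], Nat.card G ≤ n →
    ∀ M : Subgroup G, M ∈ CD G → _root_.IsSubnormal M := by
  intro n
  induction n using Nat.strong_induction_on with
  | _ n IHout =>
  intro G _ _ hGn
  suffices h : ∀ (k : ℕ) (M : Subgroup G), M ∈ CD G → Nat.card G ≤ Nat.card M + k →
      _root_.IsSubnormal M by
    intro M hM
    exact h (Nat.card G) M hM (by omega)
  intro k
  induction k with
  | zero =>
    intro M hM hcard
    have hM_top : M = ⊤ :=
      eq_top_of_card_eq M (le_antisymm (card_le_card_group M) (by omega))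
    subst hM_top
    exact isSubnormal_iff.mpr ChainTo.top
  | succ k IHk =>
    intro M hM hcard
    by_cases hC : centralizer (M : Set G) ≤ M
    · by_cases hnorm : M.Normal
      · exact isSubnormal_iff.mpr (ChainTo.single le_top (hnorm.subgroupOf ⊤))
      · obtain ⟨g, hg⟩ := exists_smul_ne hnorm
        have hACD : (MulAut.conj g • M : Subgroup G) ∈ CD G := smul_mem_CD hM g
        obtain ⟨hJCD, hmul⟩ := sup_mem_CD_and_mul_eq hACD hM
        set A := (MulAut.conj g • M : Subgroup G) with hA
        set J := A ⊔ M with hJ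
        have hMJ : M < J := by
          refine lt_of_le_of_ne le_sup_right fun he => hg ?_
          have hAM : A ≤ M := by rw [he]; exact le_sup_left
          exact eq_of_le_of_card_le' hAM (by rw [card_smul])
        by_cases hJtop : J = ⊤
        · exfalso
          have hgJ : g ∈ ((A : Set G) * (M : Set G) : Set G) := by
            rw [hmul, hJtop]
            simp
          obtain ⟨x, hx, h', hh', heq⟩ := Set.mem_mul.mp hgJ
          rw [SetLike.mem_coe, hA, mem_pointwise_smul_iff_inv_smul_mem] at hx
          have hxval : (MulAut.conj g)⁻¹ • x = g⁻¹ * x * g := by simp [MulAut.smul_def]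
          rw [hxval] at hx
          -- x * h' = g with g⁻¹ x g ∈ M, h' ∈ M; so g = h' * (g⁻¹ x g)⁻¹ ... derive g ∈ M
          have hgmem : g ∈ M := by
            have hh2 : h' = x⁻¹ * g := by rw [← heq]; group
            have key : g = h' * (g⁻¹ * x * g) := by rw [hh2]; group
            rw [key]
            exact mul_mem hh' hx
          exact hg (smul_eq_of_mem hgmem)
        · have hJsub : _root_.IsSubnormal J := by
            apply IHk J hJCD
            have := card_lt_of_lt hMJ
            omega
          have hJG : Nat.card ↥J < Nat.card G := card_lt_of_ne_top hJtop
          have hMJCD : M.subgroupOf J ∈ CD ↥J :=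
            subgroupOf_mem_CD hM hMJ.le (hC.trans hMJ.le)
          have h1 : _root_.IsSubnormal (M.subgroupOf J) :=
            IHout (Nat.card ↥J) (lt_of_lt_of_le hJG hGn) ↥J le_rfl _ hMJCD
          have hmapeq : (M.subgroupOf J).map J.subtype = M := by
            rw [subgroupOf_map_subtype]
            exact inf_eq_left.mpr hMJ.le
          have hchain1 : ChainTo M J := by
            have := ChainTo.map_subtype (isSubnormal_iff.mp h1)
            rwa [hmapeq] at this
          exact isSubnormal_iff.mpr (hchain1.trans (isSubnormal_iff.mp hJsub))
    · have hCCD : centralizer (M : Set G) ∈ CD G := centralizer_mem_CD hM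
      obtain ⟨hKCD, -⟩ := sup_mem_CD_and_mul_eq hM hCCD
      have hMK : M < M ⊔ centralizer (M : Set G) := by
        refine lt_of_le_of_ne le_sup_left fun he => hC ?_
        conv_rhs => rw [he]
        exact le_sup_right
      have hKsub : _root_.IsSubnormal (M ⊔ centralizer (M : Set G)) := by
        apply IHk _ hKCD
        have := card_lt_of_lt hMK
        omega
      have hnormal : (M.subgroupOf (M ⊔ centralizer (M : Set G))).Normal := by
        rw [normal_subgroupOf_iff hMK.le]
        intro h x hh hx
        have hKnorm : M ⊔ centralizer (M : Set G) ≤ normalizer (M : Set G) := by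
          apply sup_le le_normalizer
          intro c hc
          rw [mem_normalizer_iff]
          intro y
          constructor
          · intro hy
            have hcy : y * c = c * y := mem_centralizer_iff.mp hc y hy
            have : c * y * c⁻¹ = y := by rw [← hcy]; group
            rw [this]
            exact hy
          · intro hy
            have hcy : (c * y * c⁻¹) * c = c * (c * y * c⁻¹) :=
              mem_centralizer_iff.mp hc _ hy
            have h1 : (c * y * c⁻¹) * c = c * y := by group
            have h2 : c * y = c * (c * y * c⁻¹) := h1.symm.trans hcy
            have h3 : y = c * y * c⁻¹ := mul_left_cancel h2
            rw [h3]
            exact hy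
        exact (mem_normalizer_iff.mp (hKnorm hx) h).mp hh
      exact isSubnormal_iff.mpr ((ChainTo.single hMK.le hnormal).trans
        (isSubnormal_iff.mp hKsub))

end CDAux

theorem stmt_10 {G : Type*} [Group G] [Finite G] (U : Subgroup G) (hU : U ∈ CD G) :
    IsSubnormal U := by
  exact CDAux.main (Nat.card G) G le_rfl U hU
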